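/- For density matrices ρ, σ and a positive semidefinite operator A ≤ Id with tr(σA²) > 0, the root fidelity satisfies √F(ρ, σ|A) ≤ √tr(ρA)·√tr(σA) / √tr(σA²). In particular, if A is an orthogonal projector, √F(ρ, σ|A) ≤ √tr(ρA). -/

import Mathlib

open Matrix ComplexOrder

/-- The square root of a positive semidefinite matrix (as in the older Mathlib). -/
noncomputable def Matrix.PosSemidef.sqrt {n : Type*} [Fintype n] {𝕜 : Type*} [RCLike 𝕜]
    [DecidableEq n] {A : Matrix n n 𝕜} (hA : A.PosSemidef) : Matrix n n 𝕜 :=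
  hA.isHermitian.eigenvectorUnitary.1 * diagonal ((↑) ∘ Real.sqrt ∘ hA.isHermitian.eigenvalues) *
    (star hA.isHermitian.eigenvectorUnitary : Matrix n n 𝕜)

/-- The Schatten 1-norm (trace norm): ‖M‖₁ = tr √(MᴴM). -/
noncomputable def traceNorm {n m : Type*} [Fintype n] [Fintype m] [DecidableEq m]
    (M : Matrix n m ℂ) : ℝ :=
  ((Matrix.posSemidef_conjTranspose_mul_self M).sqrt.trace).re

section Aux
variable {n : Type*} [Fintype n] [DecidableEq n]

lemma Matrix.IsHermitian.star_mul_self_mul_eq_diagonal {A : Matrix n n ℂ} (hA : A.IsHermitian) :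
    star (hA.eigenvectorUnitary : Matrix n n ℂ) * A * hA.eigenvectorUnitary
      = diagonal (Complex.ofReal ∘ hA.eigenvalues) := by
  have h := hA.spectral_theorem
  rw [Unitary.conjStarAlgAut_apply] at h
  have hU1 : star (hA.eigenvectorUnitary : Matrix n n ℂ) * hA.eigenvectorUnitary = 1 :=
    Matrix.mem_unitaryGroup_iff'.mp hA.eigenvectorUnitary.2
  set U := (hA.eigenvectorUnitary : Matrix n n ℂ)
  set D := diagonal (RCLike.ofReal ∘ hA.eigenvalues : n → ℂ)
  calc star U * A * U = star U * (U * D * star U) * U := by rw [← h]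
  _ = (star U * U) * D * (star U * U) := by simp only [mul_assoc]
  _ = D := by rw [hU1, one_mul, mul_one]

lemma Matrix.PosSemidef.sqrt_mul_self {A : Matrix n n ℂ} (hA : A.PosSemidef) :
    hA.sqrt * hA.sqrt = A := by
  have h := hA.1.spectral_theorem
  rw [Unitary.conjStarAlgAut_apply] at h
  have hU1 : star (hA.1.eigenvectorUnitary : Matrix n n ℂ) * hA.1.eigenvectorUnitary = 1 :=
    Matrix.mem_unitaryGroup_iff'.mp hA.1.eigenvectorUnitary.2
  unfold Matrix.PosSemidef.sqrt
  conv_rhs => rw [h]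
  set U := (hA.1.eigenvectorUnitary : Matrix n n ℂ)
  set D := diagonal (RCLike.ofReal ∘ Real.sqrt ∘ hA.1.eigenvalues : n → ℂ)
  have hD : D * D = diagonal (RCLike.ofReal ∘ hA.1.eigenvalues : n → ℂ) := by
    rw [diagonal_mul_diagonal]
    congr 1
    funext i
    simp only [Function.comp_apply]
    rw [← RCLike.ofReal_mul, Real.mul_self_sqrt (hA.eigenvalues_nonneg i)]
  rw [show U * D * star U * (U * D * star U) = U * D * (star U * U) * D * star U by
    simp only [mul_assoc], hU1, mul_one, mul_assoc U D D, hD]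

lemma Matrix.PosSemidef.posSemidef_sqrt {A : Matrix n n ℂ} (hA : A.PosSemidef) :
    hA.sqrt.PosSemidef := by
  have hd : (diagonal (RCLike.ofReal ∘ Real.sqrt ∘ hA.1.eigenvalues) : Matrix n n ℂ).PosSemidef :=
    posSemidef_diagonal_iff.mpr fun i => Complex.zero_le_real.mpr (Real.sqrt_nonneg _)
  have := hd.mul_mul_conjTranspose_same (hA.1.eigenvectorUnitary : Matrix n n ℂ)
  exact this

lemma psd_trace_nonneg' {M : Matrix n n ℂ} (hM : M.PosSemidef) : 0 ≤ M.trace := by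
  exact hM.trace_nonneg

lemma psd_trace_mul_nonneg' {P Q : Matrix n n ℂ} (hP : P.PosSemidef) (hQ : Q.PosSemidef) :
    0 ≤ (P * Q).trace := by
  have h : (P * Q).trace = (hP.sqrt * Q * hP.sqrt).trace := by
    rw [trace_mul_cycle, mul_assoc, ← mul_assoc, hP.sqrt_mul_self]
  rw [h]
  refine psd_trace_nonneg' ?_
  have := hQ.conjTranspose_mul_mul_same hP.sqrt
  rwa [hP.posSemidef_sqrt.1.eq] at this

lemma nonneg_trace_re' {z : ℂ} (h : 0 ≤ z) : z = ((z.re : ℝ) : ℂ) := by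
  obtain ⟨h1, h2⟩ := Complex.nonneg_iff.mp h
  exact Complex.ext rfl (by simp [← h2])

lemma psd_smul' {M : Matrix n n ℂ} (hM : M.PosSemidef) {ε : ℝ} (hε : 0 ≤ ε) :
    ((ε : ℂ) • M).PosSemidef := by
  constructor
  · have h1 := hM.1
    rw [Matrix.IsHermitian, conjTranspose_smul, h1.eq]
    congr 1
    simp [Complex.star_def, Complex.conj_ofReal]
  · intro x
    have h2 : (0:ℂ) ≤ (ε : ℂ) := by exact_mod_cast hε
    exact (hM.smul h2).2 x

lemma fro2_eq (M : Matrix n n ℂ) :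
    ((Mᴴ * M).trace).re = ∑ p : n × n, ‖M p.1 p.2‖ ^ 2 := by
  simp only [Matrix.trace, Matrix.diag, Matrix.mul_apply, Matrix.conjTranspose_apply,
    Complex.re_sum, Fintype.sum_prod_type]
  rw [Finset.sum_comm]
  refine Finset.sum_congr rfl fun i _ => Finset.sum_congr rfl fun j _ => ?_
  simp [Complex.star_def, Complex.mul_re, Complex.sq_norm, Complex.normSq_apply]

lemma traceNorm_mul_le' (X Y : Matrix n n ℂ) :
    traceNorm (X * Y) ≤ Real.sqrt ((Xᴴ * X).trace.re) * Real.sqrt ((Yᴴ * Y).trace.re) := by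
  set M := X * Y with hM
  set hN := Matrix.posSemidef_conjTranspose_mul_self M with hNdef
  set U : Matrix n n ℂ := (hN.1.eigenvectorUnitary : Matrix n n ℂ) with hUdef
  set lam := hN.1.eigenvalues with hlam
  have hU1 : star U * U = 1 := Matrix.mem_unitaryGroup_iff'.mp hN.1.eigenvectorUnitary.2
  have hU2 : U * star U = 1 := Matrix.mem_unitaryGroup_iff.mp hN.1.eigenvectorUnitary.2
  have hdiag : star U * (Mᴴ * M) * U = Matrix.diagonal (Complex.ofReal ∘ lam) :=
    hN.1.star_mul_self_mul_eq_diagonal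
  have hlamnn : ∀ i, 0 ≤ lam i := hN.eigenvalues_nonneg
  have hsqrt : hN.sqrt = U * Matrix.diagonal (Complex.ofReal ∘ Real.sqrt ∘ lam) * star U := rfl
  have htn : traceNorm M = ((Matrix.diagonal (Complex.ofReal ∘ Real.sqrt ∘ lam)).trace).re := by
    rw [traceNorm]
    rw [hsqrt, trace_mul_cycle, hU1, one_mul]
  set f : n → ℂ := fun i => ((if lam i = 0 then 0 else (Real.sqrt (lam i))⁻¹ : ℝ) : ℂ) with hf
  have hfstar : star f = f := funext fun i => Complex.conj_ofReal _
  set W : Matrix n n ℂ := M * U * Matrix.diagonal f with hW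
  have hWH : Wᴴ = Matrix.diagonal f * (star U * Mᴴ) := by
    rw [hW, conjTranspose_mul, conjTranspose_mul, diagonal_conjTranspose, hfstar,
      star_eq_conjTranspose]
  have key1 : Wᴴ * M * U = Matrix.diagonal (Complex.ofReal ∘ Real.sqrt ∘ lam) := by
    rw [hWH]
    have h2 : Matrix.diagonal f * (star U * Mᴴ) * M * U
        = Matrix.diagonal f * (star U * (Mᴴ * M) * U) := by
      simp only [mul_assoc]
    rw [h2, hdiag, diagonal_mul_diagonal]
    refine congrArg Matrix.diagonal (funext fun i => ?_)
    by_cases h : lam i = 0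
    · simp [hf, h]
    · have hs : (Real.sqrt (lam i))⁻¹ * lam i = Real.sqrt (lam i) := by
        have h1 : Real.sqrt (lam i) ≠ 0 := by
          simpa [Real.sqrt_eq_zero (hlamnn i)] using h
        rw [← Real.mul_self_sqrt (hlamnn i)]
        field_simp
        rw [Real.sqrt_sq (Real.sqrt_nonneg (lam i))]
      simp only [hf, if_neg h, Function.comp_apply, Complex.ofReal_inv]
      exact_mod_cast hs
  have key2 : Wᴴ * W = Matrix.diagonal (fun i => (if lam i = 0 then (0:ℂ) else 1)) := by
    have h2 : Wᴴ * W = Matrix.diagonal f * (star U * (Mᴴ * M) * U) * Matrix.diagonal f := by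
      rw [hWH, hW]; simp only [mul_assoc]
    rw [h2, hdiag, diagonal_mul_diagonal, diagonal_mul_diagonal]
    refine congrArg Matrix.diagonal (funext fun i => ?_)
    by_cases h : lam i = 0
    · simp [hf, h]
    · have h1 : Real.sqrt (lam i) ≠ 0 := by
        simpa [Real.sqrt_eq_zero (hlamnn i)] using h
      have hs : (Real.sqrt (lam i))⁻¹ * lam i * (Real.sqrt (lam i))⁻¹ = 1 := by
        rw [← Real.mul_self_sqrt (hlamnn i)]
        field_simp
        rw [Real.sqrt_sq (Real.sqrt_nonneg (lam i))]
      simp only [hf, if_neg h, Function.comp_apply, Complex.ofReal_inv]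
      exact_mod_cast hs
  have hWg : W * Matrix.diagonal (fun i => (if lam i = 0 then (0:ℂ) else 1)) = W := by
    rw [hW, mul_assoc, diagonal_mul_diagonal]
    refine congrArg _ (congrArg Matrix.diagonal (funext fun i => ?_))
    by_cases h : lam i = 0 <;> simp [hf, h]
  set Pr := W * Wᴴ with hPr
  have hPrH : Prᴴ = Pr := by rw [hPr, conjTranspose_mul, conjTranspose_conjTranspose]
  have hPrIdem : Pr * Pr = Pr := by
    rw [hPr]
    calc W * Wᴴ * (W * Wᴴ) = W * (Wᴴ * W) * Wᴴ := by simp only [mul_assoc]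
    _ = W * Wᴴ := by rw [key2, hWg]
  have hK : (1 - Pr).PosSemidef := by
    have hKH : (1 - Pr)ᴴ = 1 - Pr := by
      rw [conjTranspose_sub, hPrH, conjTranspose_one]
    have hKidem : (1 - Pr) * (1 - Pr) = 1 - Pr := by
      have e : (1 - Pr) * (1 - Pr) = 1 - Pr - (Pr - Pr * Pr) := by noncomm_ring
      rw [e, hPrIdem, sub_self, sub_zero]
    have h3 := Matrix.posSemidef_conjTranspose_mul_self (1 - Pr)
    rwa [hKH, hKidem] at h3
  set P := Xᴴ * W with hP
  set Q := Y * U with hQ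
  have hPQ : Pᴴ * Q = Wᴴ * M * U := by
    rw [hP, hQ, conjTranspose_mul, conjTranspose_conjTranspose, hM]
    simp only [mul_assoc]
  have htn2 : traceNorm M = ((Pᴴ * Q).trace).re := by rw [htn, hPQ, key1]
  have hCS : ((Pᴴ * Q).trace).re ≤
      Real.sqrt (((Pᴴ * P).trace).re) * Real.sqrt (((Qᴴ * Q).trace).re) := by
    have h1 : (Pᴴ * Q).trace = ∑ p : n × n, (starRingEnd ℂ) (P p.2 p.1) * Q p.2 p.1 := by
      simp only [Matrix.trace, Matrix.diag, Matrix.mul_apply, Matrix.conjTranspose_apply,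
        Fintype.sum_prod_type, Complex.star_def]
    have habs : ((Pᴴ * Q).trace).re ≤
        ∑ p : n × n, ‖P p.1 p.2‖ * ‖Q p.1 p.2‖ := by
      calc ((Pᴴ * Q).trace).re ≤ ‖(Pᴴ * Q).trace‖ := Complex.re_le_norm _
      _ ≤ ∑ p : n × n, ‖(starRingEnd ℂ) (P p.2 p.1) * Q p.2 p.1‖ := by
          rw [h1]; exact norm_sum_le _ _
      _ = ∑ p : n × n, ‖P p.2 p.1‖ * ‖Q p.2 p.1‖ := by
          refine Finset.sum_congr rfl fun p _ => ?_
          rw [norm_mul, Complex.norm_conj]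
      _ = ∑ p : n × n, ‖P p.1 p.2‖ * ‖Q p.1 p.2‖ :=
          Fintype.sum_equiv (Equiv.prodComm n n) _ _ (fun p => rfl)
    refine habs.trans ?_
    rw [fro2_eq P, fro2_eq Q]
    exact Real.sum_mul_le_sqrt_mul_sqrt Finset.univ _ _
  have hPbound : ((Pᴴ * P).trace).re ≤ ((Xᴴ * X).trace).re := by
    have hPP : Pᴴ * P = Wᴴ * (X * Xᴴ) * W := by
      rw [hP, conjTranspose_mul, conjTranspose_conjTranspose]
      simp only [mul_assoc]
    have h0 : 0 ≤ ((X * Xᴴ) * (1 - Pr)).trace :=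
      psd_trace_mul_nonneg' (Matrix.posSemidef_self_mul_conjTranspose X) hK
    have hsplit : ((X * Xᴴ) * (1 - Pr)).trace = (Xᴴ * X).trace - (Pᴴ * P).trace := by
      rw [mul_sub, mul_one, trace_sub]
      congr 1
      · exact trace_mul_comm X Xᴴ
      · rw [hPP, hPr, ← mul_assoc, trace_mul_cycle]
    rw [hsplit] at h0
    have h4 := (Complex.nonneg_iff.mp h0).1
    rw [Complex.sub_re] at h4
    linarith
  have hQeq : ((Qᴴ * Q).trace).re = ((Yᴴ * Y).trace).re := by
    have h5 : Qᴴ * Q = star U * (Yᴴ * Y) * U := by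
      rw [hQ, conjTranspose_mul, star_eq_conjTranspose]
      simp only [mul_assoc]
    rw [h5, trace_mul_cycle, hU2, one_mul]
  rw [htn2]
  refine hCS.trans ?_
  rw [hQeq]
  exact mul_le_mul_of_nonneg_right (Real.sqrt_le_sqrt hPbound) (Real.sqrt_nonneg _)

end Aux

/-- √F(ρ, σ|A) ≤ √tr(ρA)·√tr(σA)/√tr(σA²); for a projector, √F(ρ, σ|A) ≤ √tr(ρA). -/
theorem rootFidelity_cond_le {d : ℕ} (ρ σ A : Matrix (Fin d) (Fin d) ℂ)
    (hρ : ρ.PosSemidef) (hρ1 : ρ.trace = 1)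
    (hσ : σ.PosSemidef) (hσ1 : σ.trace = 1)
    (hA : A.PosSemidef) (hA1 : (1 - A).PosSemidef)
    (hpos : 0 < ((σ * (A * A)).trace).re)
    (hcond : (((σ * (A * A)).trace)⁻¹ • (A * σ * A)).PosSemidef) :
    traceNorm (hρ.sqrt * hcond.sqrt) ≤
        Real.sqrt (((ρ * A).trace).re) * Real.sqrt (((σ * A).trace).re) /
          Real.sqrt (((σ * (A * A)).trace).re) ∧
      (A * A = A → traceNorm (hρ.sqrt * hcond.sqrt) ≤ Real.sqrt (((ρ * A).trace).re)) := by
  set c' := (σ * (A * A)).trace with hc'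
  have hAσA : (A * σ * A).PosSemidef := by
    have h := hσ.conjTranspose_mul_mul_same A
    rwa [hA.1.eq] at h
  have hc'AσA : c' = (A * σ * A).trace := by
    rw [hc', ← mul_assoc, trace_mul_cycle]
  have hc'nn : 0 ≤ c' := hc'AσA ▸ psd_trace_nonneg' hAσA
  have hc'real : c' = ((c'.re : ℝ) : ℂ) := nonneg_trace_re' hc'nn
  set c := c'.re with hcdef
  have hcpos : 0 < c := hpos
  set S := hρ.sqrt with hSdef
  set T := hcond.sqrt with hTdef
  have hT2 : T * T = c'⁻¹ • (A * σ * A) := hcond.sqrt_mul_self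
  have hS2 : S * S = ρ := hρ.sqrt_mul_self
  have hSH : Sᴴ = S := hρ.posSemidef_sqrt.1
  have hTH : Tᴴ = T := hcond.posSemidef_sqrt.1
  have hsnn : 0 ≤ ((σ * A).trace).re :=
    (Complex.nonneg_iff.mp (psd_trace_mul_nonneg' hσ hA)).1
  have hrnn : 0 ≤ ((ρ * A).trace).re :=
    (Complex.nonneg_iff.mp (psd_trace_mul_nonneg' hρ hA)).1
  have main : ∀ ε : ℝ, 0 < ε → traceNorm (S * T) ≤
      Real.sqrt (((ρ * A).trace).re + ε) * Real.sqrt (((σ * A).trace).re / c) := by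
    intro ε hε
    set Aε := A + (ε : ℂ) • 1 with hAεdef
    have hAεpd : Aε.PosDef := by
      have h1 : ((ε : ℂ) • (1 : Matrix (Fin d) (Fin d) ℂ)).PosDef := by
        have h2 : (ε : ℂ) • (1 : Matrix (Fin d) (Fin d) ℂ)
            = Matrix.diagonal (fun _ => (ε : ℂ)) := by
          ext i j
          by_cases h : i = j <;> simp [Matrix.one_apply, Matrix.diagonal, h]
        rw [h2]
        refine Matrix.posDef_diagonal_iff.mpr fun i => ?_
        exact_mod_cast hε
      exact Matrix.PosDef.posSemidef_add hA h1
    have hAεH : Aεᴴ = Aε := hAεpd.isHermitian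
    have hAεdet : IsUnit Aε.det := hAεpd.det_pos.ne'.isUnit
    have hAεinv1 : Aε * Aε⁻¹ = 1 := mul_nonsing_inv Aε hAεdet
    have hAεinv2 : Aε⁻¹ * Aε = 1 := nonsing_inv_mul Aε hAεdet
    set hAεpsd := hAεpd.posSemidef with hAεpsddef
    set B := hAεpsd.sqrt with hBdef
    have hB2 : B * B = Aε := hAεpsd.sqrt_mul_self
    have hBH : Bᴴ = B := hAεpsd.posSemidef_sqrt.1
    have hBdet : IsUnit B.det := by
      have h3 : B.det * B.det = Aε.det := by rw [← det_mul, hB2]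
      refine isUnit_iff_ne_zero.mpr fun h0 => ?_
      exact hAεpd.det_pos.ne' (by rw [← h3, h0, mul_zero])
    have hBinv : B * B⁻¹ = 1 := mul_nonsing_inv B hBdet
    have hBinvH : (B⁻¹)ᴴ = B⁻¹ := by rw [conjTranspose_nonsing_inv, hBH]
    have hST : S * T = (S * B) * (B⁻¹ * T) := by
      rw [mul_assoc, ← mul_assoc B, hBinv, one_mul]
    have step := traceNorm_mul_le' (S * B) (B⁻¹ * T)
    rw [← hST] at step
    have hXfact : (((S * B)ᴴ * (S * B)).trace).re = ((ρ * A).trace).re + ε := by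
      have e1 : (S * B)ᴴ * (S * B) = B * (S * S) * B := by
        rw [conjTranspose_mul, hSH, hBH]
        simp only [mul_assoc]
      have e2 : ((S * B)ᴴ * (S * B)).trace = (ρ * Aε).trace := by
        rw [e1, trace_mul_cycle, hB2, hS2, trace_mul_comm]
      have e3 : (ρ * Aε).trace = (ρ * A).trace + (ε : ℂ) := by
        rw [hAεdef, mul_add, trace_add]
        congr 1
        rw [mul_smul_comm, trace_smul, mul_one, hρ1, smul_eq_mul, mul_one]
      rw [e2, e3, Complex.add_re, Complex.ofReal_re]
    have hAm : A * Aε = A * A + (ε : ℂ) • A := by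
      rw [hAεdef, mul_add, mul_smul_comm, mul_one]
    have h3c : Aε⁻¹ * (A * Aε) * Aε⁻¹ = Aε⁻¹ * A := by
      rw [show Aε⁻¹ * (A * Aε) * Aε⁻¹ = Aε⁻¹ * A * (Aε * Aε⁻¹) from by
        simp only [mul_assoc], hAεinv1, mul_one]
    have h4c : Aε⁻¹ * (Aε * A) * Aε⁻¹ = A * Aε⁻¹ := by
      rw [show Aε⁻¹ * (Aε * A) * Aε⁻¹ = Aε⁻¹ * Aε * (A * Aε⁻¹) from by
        simp only [mul_assoc], hAεinv2, one_mul]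
    have hcomm : A * Aε⁻¹ = Aε⁻¹ * A := by
      have h1 : A * Aε = Aε * A := by
        rw [hAεdef, mul_add, add_mul, mul_smul_comm, smul_mul_assoc, mul_one, one_mul]
      rw [← h4c, ← h1, h3c]
    have hAεinvpsd : (Aε⁻¹).PosSemidef := hAεpsd.inv
    have hAAinvA : (A * Aε⁻¹ * A).PosSemidef := by
      have h := hAεinvpsd.conjTranspose_mul_mul_same A
      rwa [hA.1.eq] at h
    have hAinvApsd : ((ε : ℂ) • (A * Aε⁻¹)).PosSemidef := by
      have h1 : A * Aε⁻¹ = Aε⁻¹ * (A * A + (ε : ℂ) • A) * Aε⁻¹ := by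
        rw [← hAm, h3c, ← hcomm]
      have h3 : (A * A + (ε : ℂ) • A).PosSemidef := by
        refine Matrix.PosSemidef.add ?_ (psd_smul' hA hε.le)
        have h4 := Matrix.posSemidef_conjTranspose_mul_self A
        rwa [hA.1.eq] at h4
      have h5 := h3.conjTranspose_mul_mul_same Aε⁻¹
      rw [hAεinvpsd.1.eq] at h5
      rw [h1]
      exact psd_smul' h5 hε.le
    have hdiff : (A - A * Aε⁻¹ * A).PosSemidef := by
      have hval : A - A * Aε⁻¹ * A = (ε : ℂ) • (A * Aε⁻¹) := by
        have h6 : A = A * Aε⁻¹ * A + (ε : ℂ) • (A * Aε⁻¹) := by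
          calc A = A * Aε⁻¹ * Aε := by rw [mul_assoc, hAεinv2, mul_one]
          _ = A * Aε⁻¹ * A + (ε : ℂ) • (A * Aε⁻¹) := by
              rw [hAεdef, mul_add, mul_smul_comm, mul_one]
        nth_rewrite 1 [h6]
        exact add_sub_cancel_left _ _
      rw [hval]
      exact hAinvApsd
    have hYfact : (((B⁻¹ * T)ᴴ * (B⁻¹ * T)).trace).re ≤ ((σ * A).trace).re / c := by
      have e1 : (B⁻¹ * T)ᴴ * (B⁻¹ * T) = T * (B⁻¹ * B⁻¹) * T := by
        rw [conjTranspose_mul, hBinvH, hTH]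
        simp only [mul_assoc]
      have hBB : B⁻¹ * B⁻¹ = Aε⁻¹ := by rw [← Matrix.mul_inv_rev, hB2]
      have e2 : ((B⁻¹ * T)ᴴ * (B⁻¹ * T)).trace = (Aε⁻¹ * (T * T)).trace := by
        rw [e1, hBB, trace_mul_cycle, trace_mul_comm]
      have h6 : (Aε⁻¹ * (A * σ * A)).trace = (σ * (A * Aε⁻¹ * A)).trace := by
        rw [trace_mul_comm Aε⁻¹ (A * σ * A)]
        rw [show A * σ * A * Aε⁻¹ = (A * σ) * (A * Aε⁻¹) from by simp only [mul_assoc]]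
        rw [trace_mul_comm (A * σ) (A * Aε⁻¹)]
        rw [show (A * Aε⁻¹) * (A * σ) = (A * Aε⁻¹ * A) * σ from by simp only [mul_assoc]]
        rw [trace_mul_comm (A * Aε⁻¹ * A) σ]
      have h7 : 0 ≤ (σ * A).trace - (σ * (A * Aε⁻¹ * A)).trace := by
        have h8 := psd_trace_mul_nonneg' hσ hdiff
        rwa [mul_sub, trace_sub] at h8
      have h9 : 0 ≤ (σ * (A * Aε⁻¹ * A)).trace := psd_trace_mul_nonneg' hσ hAAinvA
      have h10 : ((σ * (A * Aε⁻¹ * A)).trace).re ≤ ((σ * A).trace).re := by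
        have := (Complex.nonneg_iff.mp h7).1
        rw [Complex.sub_re] at this
        linarith
      have h11 : 0 ≤ ((σ * (A * Aε⁻¹ * A)).trace).re := (Complex.nonneg_iff.mp h9).1
      rw [e2, hT2, Matrix.mul_smul, trace_smul, smul_eq_mul]
      rw [hc'real, ← Complex.ofReal_inv, h6]
      rw [Complex.re_ofReal_mul]
      rw [div_eq_inv_mul]
      exact mul_le_mul_of_nonneg_left h10 (by positivity)
    calc traceNorm (S * T) ≤ _ := step
    _ ≤ Real.sqrt (((ρ * A).trace).re + ε) * Real.sqrt (((σ * A).trace).re / c) := by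
        rw [hXfact]
        exact mul_le_mul_of_nonneg_left (Real.sqrt_le_sqrt hYfact) (Real.sqrt_nonneg _)
  have hmainle : traceNorm (S * T) ≤
      Real.sqrt (((ρ * A).trace).re) * Real.sqrt (((σ * A).trace).re / c) := by
    have hcont : Filter.Tendsto
        (fun ε : ℝ => Real.sqrt (((ρ * A).trace).re + ε) * Real.sqrt (((σ * A).trace).re / c))
        (nhdsWithin 0 (Set.Ioi 0))
        (nhds (Real.sqrt (((ρ * A).trace).re) * Real.sqrt (((σ * A).trace).re / c))) := by
      have hco : Continuous fun ε : ℝ =>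
          Real.sqrt (((ρ * A).trace).re + ε) * Real.sqrt (((σ * A).trace).re / c) :=
        ((Real.continuous_sqrt.comp (continuous_const.add continuous_id)).mul continuous_const)
      have h0 := hco.tendsto 0
      simpa using h0.mono_left nhdsWithin_le_nhds
    exact ge_of_tendsto hcont (eventually_nhdsWithin_of_forall fun ε hε => main ε hε)
  constructor
  · refine hmainle.trans_eq ?_
    rw [Real.sqrt_div hsnn, mul_div_assoc]
  · intro hproj
    have hceq : c = ((σ * A).trace).re := by rw [hcdef, hc', hproj]
    have h12 : ((σ * A).trace).re / c = 1 := by rw [← hceq, div_self hcpos.ne']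
    calc traceNorm (S * T) ≤ _ := hmainle
    _ = Real.sqrt (((ρ * A).trace).re) := by rw [h12, Real.sqrt_one, mul_one]
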